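/- For any finite undirected multigraph G = (V,E), any sets A, B ⊆ V², and any subset S ⊆ E, the number |Four_{G,S}(A,B)| of (A,B)-valid fourientations of G whose set of solid edges equals S does not depend on S; i.e., for all S, S' ⊆ E one has |Four_{G,S}(A,B)| = |Four_{G,S'}(A,B)|. -/

import Mathlib

namespace SubgraphsVsOrientations

/-- The four possible configurations of an edge in a fourientation:
`zero` = 0-way, `forward`/`backward` = the two 1-way configurations (relative to
a reference direction of the edge), `two` = 2-way. -/
inductive Four : Type
  | zero | forward | backward | two
deriving DecidableEq

instance instFintypeFour : Fintype Four :=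
  ⟨{Four.zero, Four.forward, Four.backward, Four.two}, fun x => by cases x <;> simp⟩

variable {V E : Type*}

/-- Whether configuration `c` allows traversal of the edge in direction `b`
(`b = true` means from `src` to `tgt`). -/
def allows : Four → Bool → Prop
  | Four.zero, _ => False
  | Four.forward, b => b = true
  | Four.backward, b => b = false
  | Four.two, _ => True

/-- An edge configuration is solid if it is 0-way or 2-way. -/
def IsSolid (c : Four) : Prop := c = Four.zero ∨ c = Four.two

/-- A configuration is 1-way if it is `forward` or `backward`. -/
def IsOneWay (c : Four) : Prop := c = Four.forward ∨ c = Four.backward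

/-- Reversing a configuration: swaps the two 1-way configurations,
fixes 0-way and 2-way. -/
def flipFour : Four → Four
  | Four.forward => Four.backward
  | Four.backward => Four.forward
  | c => c

/-- The 1-way configuration corresponding to direction `b`. -/
def oneWayFour (b : Bool) : Four := if b then Four.forward else Four.backward

/-- Tail of the arc `(e, b)` (the edge `e` traversed in direction `b`). -/
def arcTail (src tgt : E → V) (a : E × Bool) : V := if a.2 then src a.1 else tgt a.1

/-- Head of the arc `(e, b)`. -/
def arcHead (src tgt : E → V) (a : E × Bool) : V := if a.2 then tgt a.1 else src a.1

/-- One-step relation of the digraph `G⃗(A,B;φ)`: there is an arc from `x` to `y`, either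
a traversable directed edge of the fourientation `φ`, or an extra arc from `A ∪ B`. -/
def arcStep (src tgt : E → V) (A B : Set (V × V)) (φ : E → Four) (x y : V) : Prop :=
  (∃ a : E × Bool, allows (φ a.1) a.2 ∧ arcTail src tgt a = x ∧ arcHead src tgt a = y)
    ∨ (x, y) ∈ A ∪ B

/-- Reachability by a directed path in the digraph `G⃗(A,B;φ)`. -/
def reach (src tgt : E → V) (A B : Set (V × V)) (φ : E → Four) : V → V → Prop :=
  Relation.ReflTransGen (arcStep src tgt A B φ)

/-- A fourientation `φ` is `(A,B)`-valid: in `G⃗(A,B;φ)`, for every `(u,v) ∈ A` the vertex `v`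
cannot reach `u`, and for every `(u,v) ∈ B` the vertex `v` can reach `u`. -/
def IsValid (src tgt : E → V) (A B : Set (V × V)) (φ : E → Four) : Prop :=
  (∀ p ∈ A, ¬ reach src tgt A B φ p.2 p.1) ∧ (∀ p ∈ B, reach src tgt A B φ p.2 p.1)

/-- The set of solid edges of a fourientation. -/
def solidSet (φ : E → Four) : Set E := {e | IsSolid (φ e)}

/-- The fourientation associated to an orientation `σ : E → Bool` (every edge 1-way). -/
def toFour (σ : E → Bool) : E → Four := fun e => oneWayFour (σ e)

open Classical in
/-- The fourientation associated to a (spanning) subgraph `F ⊆ E`: edges of `F` are 2-way,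
the other edges are 0-way. -/
noncomputable def toFourSub (F : Set E) : E → Four :=
  fun e => if e ∈ F then Four.two else Four.zero

/-- The arc `(e,b)` is the arc of a 1-way edge of `φ`. -/
def oneWayArc (φ : E → Four) (a : E × Bool) : Prop := φ a.1 = oneWayFour a.2

/-- `Cyc(φ)`: the set of cyclic 1-way edges (arcs) of the fourientation `φ`, in the digraph
`G⃗(A,B;φ)`: the head of the arc can reach its tail. -/
def CycSet (src tgt : E → V) (A B : Set (V × V)) (φ : E → Four) : Set (E × Bool) :=
  {a | oneWayArc φ a ∧ reach src tgt A B φ (arcHead src tgt a) (arcTail src tgt a)}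

/-- `Acy(φ)`: the set of acyclic 1-way edges (arcs) of the fourientation `φ`. -/
def AcySet (src tgt : E → V) (A B : Set (V × V)) (φ : E → Four) : Set (E × Bool) :=
  {a | oneWayArc φ a ∧ ¬ reach src tgt A B φ (arcHead src tgt a) (arcTail src tgt a)}

/-- `l` is (the arc sequence of) a directed cycle: a nonempty closed chain of arcs
visiting no vertex twice. -/
def IsDirCycle (src tgt : E → V) (l : List (E × Bool)) : Prop :=
  ∃ h : l ≠ [],
    l.Chain' (fun a b => arcHead src tgt a = arcTail src tgt b) ∧
    arcHead src tgt (l.getLast h) = arcTail src tgt (l.head h) ∧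
    (l.map (arcTail src tgt)).Nodup

/-- Reversing the directed cycle `l` in the fourientation `φ`: all 1-way edges on the cycle are
reversed, other edges (in particular 2-way edges of the cycle) are unchanged. -/
def revCyc [DecidableEq E] (φ : E → Four) (l : List (E × Bool)) : E → Four :=
  fun e => if (e, true) ∈ l ∨ (e, false) ∈ l then flipFour (φ e) else φ e

/-- One cycle-reversal move: `ψ` is obtained from `φ` by reversing a directed cycle of `φ`. -/
def CycleStep (src tgt : E → V) [DecidableEq E] (φ ψ : E → Four) : Prop :=
  ∃ l, IsDirCycle src tgt l ∧ (∀ a ∈ l, allows (φ a.1) a.2) ∧ ψ = revCyc φ l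

/-- The edge `e` crosses the cut given by `V1` (in either direction). -/
def edgeCrosses (src tgt : E → V) (V1 : Set V) (e : E) : Prop :=
  (src e ∈ V1 ∧ tgt e ∉ V1) ∨ (tgt e ∈ V1 ∧ src e ∉ V1)

/-- The cut `V1 / V1ᶜ` defines a directed `(A,B)`-cocycle of `G⃗(A,B;φ)`: the set of arcs from
`V1` to `V1ᶜ` is nonempty, no arc of the digraph goes from `V1ᶜ` to `V1`, and no arc of
`A ∪ B` crosses the cut (in either direction). -/
def IsABCocycleCut (src tgt : E → V) (A B : Set (V × V)) (φ : E → Four) (V1 : Set V) : Prop :=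
  (∃ a : E × Bool, allows (φ a.1) a.2 ∧ arcTail src tgt a ∈ V1 ∧ arcHead src tgt a ∉ V1) ∧
  (∀ a : E × Bool, allows (φ a.1) a.2 → ¬ (arcTail src tgt a ∉ V1 ∧ arcHead src tgt a ∈ V1)) ∧
  (∀ p ∈ A ∪ B, ((p : V × V).1 ∈ V1 ↔ p.2 ∈ V1))

open Classical in
/-- Reversing the directed cocycle given by the cut `V1`: all 1-way edges crossing the cut are
reversed, other edges (in particular 0-way edges crossing the cut) are unchanged. -/
noncomputable def revCut (src tgt : E → V) (φ : E → Four) (V1 : Set V) : E → Four :=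
  fun e => if edgeCrosses src tgt V1 e then flipFour (φ e) else φ e

/-- One cocycle-reversal move: `ψ` is obtained from `φ` by reversing a directed
`(A,B)`-cocycle of `φ`. -/
def CocycleStep (src tgt : E → V) (A B : Set (V × V)) (φ ψ : E → Four) : Prop :=
  ∃ V1 : Set V, IsABCocycleCut src tgt A B φ V1 ∧ ψ = revCut src tgt φ V1

/-- One cycle- or cocycle-reversal move. -/
def CCStep (src tgt : E → V) (A B : Set (V × V)) [DecidableEq E] (φ ψ : E → Four) : Prop :=
  CycleStep src tgt φ ψ ∨ CocycleStep src tgt A B φ ψ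

/-- `φ` contains no cycle (of the graph `G`) made entirely of 2-way edges. -/
def NoTwoWayCycle (src tgt : E → V) (φ : E → Four) : Prop :=
  ¬ ∃ l : List (E × Bool), IsDirCycle src tgt l ∧ (l.map Prod.fst).Nodup ∧
      ∀ a ∈ l, φ a.1 = Four.two

/-- `φ` contains no `(A,B)`-cocycle (of the graph `G`) made entirely of 0-way edges:
there is no cut, not crossed by any arc of `A ∪ B`, crossed by at least one edge of `G`,
all of whose crossing edges are 0-way. -/
def NoZeroWayCocycle (src tgt : E → V) (A B : Set (V × V)) (φ : E → Four) : Prop :=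
  ¬ ∃ V1 : Set V, (∃ e, edgeCrosses src tgt V1 e) ∧
      (∀ e, edgeCrosses src tgt V1 e → φ e = Four.zero) ∧
      (∀ p ∈ A ∪ B, ((p : V × V).1 ∈ V1 ↔ p.2 ∈ V1))

/-- The subgraph `F` contains no cycle (it is a forest). -/
def NoCycleIn (src tgt : E → V) (F : Set E) : Prop :=
  ¬ ∃ l : List (E × Bool), IsDirCycle src tgt l ∧ (l.map Prod.fst).Nodup ∧ ∀ a ∈ l, a.1 ∈ F

/-- One undirected adjacency step in the graph `F ∪ A̲ ∪ B̲`. -/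
def usym (src tgt : E → V) (A B : Set (V × V)) (F : Set E) (x y : V) : Prop :=
  (∃ e ∈ F, (src e = x ∧ tgt e = y) ∨ (src e = y ∧ tgt e = x)) ∨
  (∃ p ∈ A ∪ B, ((p : V × V) = (x, y) ∨ p = (y, x)))

/-- Connectivity (by undirected paths) in the graph `F ∪ A̲ ∪ B̲`. -/
def ureach (src tgt : E → V) (A B : Set (V × V)) (F : Set E) : V → V → Prop :=
  Relation.ReflTransGen (usym src tgt A B F)

/-- The subgraph `F` is `(A,B)`-connected: the connected components of `F ∪ A̲ ∪ B̲`
coincide with those of `G ∪ A̲ ∪ B̲`. -/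
def ABConnected (src tgt : E → V) (A B : Set (V × V)) (F : Set E) : Prop :=
  ∀ x y, ureach src tgt A B F x y ↔ ureach src tgt A B Set.univ x y

/-! ### Auxiliary development for `statement0` -/

section Statement0Aux

private lemma rtg_mono {α : Type*} {r p : α → α → Prop} {a b : α}
    (h : ∀ a b, r a b → p a b) (hab : Relation.ReflTransGen r a b) :
    Relation.ReflTransGen p a b :=
  Relation.ReflTransGen.mono h a b hab

private lemma rtg_congr {α : Type*} {r s : α → α → Prop} (h : ∀ x y, r x y ↔ s x y)
    {x y : α} : Relation.ReflTransGen r x y ↔ Relation.ReflTransGen s x y :=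
  ⟨fun hr => rtg_mono (fun a b hab => (h a b).mp hab) hr,
   fun hr => rtg_mono (fun a b hab => (h a b).mpr hab) hr⟩

private lemma rtg_arc {α : Type*} {r : α → α → Prop} {u v x y : α} :
    Relation.ReflTransGen (fun a b => r a b ∨ (a = u ∧ b = v)) x y ↔
      (Relation.ReflTransGen r x y ∨
        (Relation.ReflTransGen r x u ∧ Relation.ReflTransGen r v y)) := by
  constructor
  · intro h
    induction h with
    | refl => exact Or.inl .refl
    | tail h1 h2 ih =>
      rcases h2 with h2 | ⟨rfl, rfl⟩
      · rcases ih with ih | ⟨ih1, ih2⟩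
        · exact Or.inl (ih.tail h2)
        · exact Or.inr ⟨ih1, ih2.tail h2⟩
      · rcases ih with ih | ⟨ih1, _⟩
        · exact Or.inr ⟨ih, .refl⟩
        · exact Or.inr ⟨ih1, .refl⟩
  · rintro (h | ⟨h1, h2⟩)
    · exact rtg_mono (fun a b hab => Or.inl hab) h
    · exact ((rtg_mono (fun a b hab => Or.inl hab) h1).tail (Or.inr ⟨rfl, rfl⟩)).trans
        (rtg_mono (fun a b hab => Or.inl hab) h2)

/-- Reachability with one extra arc `u → v` added to `R`. -/
private def Rarc {V : Type*} (R : V → V → Prop) (u v : V) (x y : V) : Prop :=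
  R x y ∨ (R x u ∧ R v y)

private def Valid' {V : Type*} (A B : Set (V × V)) (Q : V → V → Prop) : Prop :=
  (∀ p ∈ A, ¬ Q p.2 p.1) ∧ (∀ p ∈ B, Q p.2 p.1)

private lemma valid'_congr {V : Type*} {A B : Set (V × V)} {Q Q' : V → V → Prop}
    (h : ∀ x y, Q x y ↔ Q' x y) : Valid' A B Q ↔ Valid' A B Q' := by
  constructor <;> rintro ⟨h1, h2⟩
  · exact ⟨fun p hp hq => h1 p hp ((h _ _).mpr hq), fun p hp => (h _ _).mp (h2 p hp)⟩
  · exact ⟨fun p hp hq => h1 p hp ((h _ _).mp hq), fun p hp => (h _ _).mpr (h2 p hp)⟩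

section AbstractValid

variable {V : Type*} {A B : Set (V × V)} {R : V → V → Prop}

/-- The "two-way" relation `Rarc u v ⊔ Rarc v u` collapses correctly. -/
private lemma rarc_two (htrans : ∀ {x y z : V}, R x y → R y z → R x z) (u v x y : V) :
    (Rarc R u v x y ∨ (Rarc R u v x v ∧ Rarc R u v u y)) ↔
      (Rarc R u v x y ∨ Rarc R v u x y) := by
  unfold Rarc
  constructor
  · rintro (h | ⟨(h1 | ⟨h1, h2⟩), (h3 | ⟨h3, h4⟩)⟩)
    · exact Or.inl h
    · exact Or.inr (Or.inr ⟨h1, h3⟩)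
    · exact Or.inl (Or.inl (htrans h1 h4))
    · exact Or.inl (Or.inl (htrans h1 h3))
    · exact Or.inl (Or.inr ⟨h1, h4⟩)
  · rintro ((h | h) | (h | ⟨h1, h2⟩))
    · exact Or.inl (Or.inl h)
    · exact Or.inl (Or.inr h)
    · exact Or.inl (Or.inl h)
    · exact Or.inr ⟨Or.inl h1, Or.inl h2⟩

private lemma l2a {u v : V} (htrans : ∀ {x y z : V}, R x y → R y z → R x z)
    (hAB : ∀ p ∈ A ∪ B, R p.1 p.2) (h : Valid' A B (Rarc R u v)) :
    Valid' A B R ∨ Valid' A B (fun x y => Rarc R u v x y ∨ Rarc R v u x y) := by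
  by_cases hb : ∀ p ∈ B, R p.2 p.1
  · exact Or.inl ⟨fun p hp hr => h.1 p hp (Or.inl hr), hb⟩
  · right
    push_neg at hb
    obtain ⟨q, hq, hnR⟩ := hb
    rcases h.2 q hq with hf | ⟨h1, h2⟩
    · exact absurd hf hnR
    have hvu : R v u := htrans (htrans h2 (hAB q (Or.inr hq))) h1
    refine ⟨fun p hp hr => ?_, fun p hp => Or.inl (h.2 p hp)⟩
    rcases hr with hr | (hr | ⟨ha, hb'⟩)
    · exact h.1 p hp hr
    · exact h.1 p hp (Or.inl hr)
    · exact h.1 p hp (Or.inl (htrans ha (htrans hvu hb')))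

private lemma l2b {u v : V} (htrans : ∀ {x y z : V}, R x y → R y z → R x z)
    (hAB : ∀ p ∈ A ∪ B, R p.1 p.2) (h : Valid' A B R) :
    Valid' A B (Rarc R u v) ∨ Valid' A B (Rarc R v u) := by
  by_cases ha : ∀ p ∈ A, ¬ Rarc R u v p.2 p.1
  · exact Or.inl ⟨ha, fun p hp => Or.inl (h.2 p hp)⟩
  · right
    push_neg at ha
    obtain ⟨p, hp, hf⟩ := ha
    rcases hf with hf | ⟨h1, h2⟩
    · exact absurd hf (h.1 p hp)
    have hvu : R v u := htrans h2 (htrans (hAB p (Or.inl hp)) h1)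
    refine ⟨fun q hq hr => ?_, fun q hq => Or.inl (h.2 q hq)⟩
    rcases hr with hr | ⟨ha', hb'⟩
    · exact h.1 q hq hr
    · exact h.1 q hq (htrans ha' (htrans hvu hb'))

private lemma l2c {u v : V} (htrans : ∀ {x y z : V}, R x y → R y z → R x z)
    (hAB : ∀ p ∈ A ∪ B, R p.1 p.2)
    (h : Valid' A B (fun x y => Rarc R u v x y ∨ Rarc R v u x y)) :
    Valid' A B (Rarc R u v) ∨ Valid' A B (Rarc R v u) := by
  by_cases hb : ∀ q ∈ B, Rarc R u v q.2 q.1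
  · exact Or.inl ⟨fun p hp hr => h.1 p hp (Or.inl hr), hb⟩
  · right
    push_neg at hb
    obtain ⟨q, hq, hnf⟩ := hb
    rcases h.2 q hq with h2' | (h2' | ⟨h1, h2⟩)
    · exact absurd h2' hnf
    · exact absurd (Or.inl h2') hnf
    have huv : R u v := htrans h2 (htrans (hAB q (Or.inr hq)) h1)
    refine ⟨fun p hp hr => h.1 p hp (Or.inr hr), fun p hp => ?_⟩
    rcases h.2 p hp with (hf | ⟨ha', hb''⟩) | hb'
    · exact Or.inl hf
    · exact Or.inl (htrans ha' (htrans huv hb''))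
    · exact hb'

private lemma l1 {u v : V} (htrans : ∀ {x y z : V}, R x y → R y z → R x z) :
    (Valid' A B R ∧ Valid' A B (fun x y => Rarc R u v x y ∨ Rarc R v u x y)) ↔
      (Valid' A B (Rarc R u v) ∧ Valid' A B (Rarc R v u)) := by
  constructor
  · rintro ⟨h0, h2⟩
    exact ⟨⟨fun p hp hr => h2.1 p hp (Or.inl hr), fun p hp => Or.inl (h0.2 p hp)⟩,
           ⟨fun p hp hr => h2.1 p hp (Or.inr hr), fun p hp => Or.inl (h0.2 p hp)⟩⟩
  · rintro ⟨hf, hbk⟩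
    refine ⟨⟨fun p hp hr => hf.1 p hp (Or.inl hr), fun p hp => ?_⟩,
            ⟨fun p hp hr => hr.elim (hf.1 p hp) (hbk.1 p hp), fun p hp => Or.inl (hf.2 p hp)⟩⟩
    rcases hf.2 p hp with h | ⟨h1, _⟩
    · exact h
    rcases hbk.2 p hp with h | ⟨_, h4⟩
    · exact h
    · exact htrans h1 h4

private lemma l2 {u v : V} (htrans : ∀ {x y z : V}, R x y → R y z → R x z)
    (hAB : ∀ p ∈ A ∪ B, R p.1 p.2) :
    (Valid' A B R ∨ Valid' A B (fun x y => Rarc R u v x y ∨ Rarc R v u x y)) ↔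
      (Valid' A B (Rarc R u v) ∨ Valid' A B (Rarc R v u)) := by
  constructor
  · rintro (h | h)
    · exact l2b htrans hAB h
    · exact l2c htrans hAB h
  · rintro (h | h)
    · exact l2a htrans hAB h
    · rcases l2a (R := R) (u := v) (v := u) htrans hAB h with h' | h'
      · exact Or.inl h'
      · exact Or.inr ((valid'_congr fun x y => or_comm).mp h')

end AbstractValid

section ConcreteValid

variable {V E : Type*} [DecidableEq E] (src tgt : E → V) (A B : Set (V × V))

private lemma reach_AB (φ : E → Four) : ∀ p ∈ A ∪ B, reach src tgt A B φ p.1 p.2 :=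
  fun _ hp => Relation.ReflTransGen.single (Or.inr hp)

private lemma arcStep_update_oneWay (φ : E → Four) (e : E) (b : Bool) (x y : V) :
    arcStep src tgt A B (Function.update φ e (oneWayFour b)) x y ↔
      (arcStep src tgt A B (Function.update φ e Four.zero) x y ∨
        (x = arcTail src tgt (e, b) ∧ y = arcHead src tgt (e, b))) := by
  constructor
  · rintro (⟨a, hall, ht, hh⟩ | hab)
    · by_cases he : a.1 = e
      · rw [he, Function.update_self] at hall
        have hb : a.2 = b := by
          cases b <;> rcases hA : a.2 <;> simp_all [oneWayFour, allows]
        have ha : a = (e, b) := Prod.ext he hb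
        rw [← ha]
        exact Or.inr ⟨ht.symm, hh.symm⟩
      · rw [Function.update_of_ne he] at hall
        exact Or.inl (Or.inl ⟨a, by rw [Function.update_of_ne he]; exact hall, ht, hh⟩)
    · exact Or.inl (Or.inr hab)
  · rintro ((⟨a, hall, ht, hh⟩ | hab) | ⟨rfl, rfl⟩)
    · by_cases he : a.1 = e
      · rw [he, Function.update_self] at hall
        exact absurd hall (by simp [allows])
      · rw [Function.update_of_ne he] at hall
        exact Or.inl ⟨a, by rw [Function.update_of_ne he]; exact hall, ht, hh⟩
    · exact Or.inr hab
    · refine Or.inl ⟨(e, b), ?_, rfl, rfl⟩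
      show allows (Function.update φ e (oneWayFour b) e) b
      rw [Function.update_self]
      cases b <;> simp [allows, oneWayFour]

private lemma arcStep_update_two (φ : E → Four) (e : E) (x y : V) :
    arcStep src tgt A B (Function.update φ e Four.two) x y ↔
      (arcStep src tgt A B (Function.update φ e (oneWayFour true)) x y ∨
        (x = arcTail src tgt (e, false) ∧ y = arcHead src tgt (e, false))) := by
  constructor
  · rintro (⟨a, hall, ht, hh⟩ | hab)
    · by_cases he : a.1 = e
      · rcases hA : a.2 with _ | _
        · have ha : a = (e, false) := Prod.ext he hA
          rw [← ha]
          exact Or.inr ⟨ht.symm, hh.symm⟩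
        · have ha : a = (e, true) := Prod.ext he hA
          refine Or.inl (Or.inl ⟨a, ?_, ht, hh⟩)
          rw [ha]
          show allows (Function.update φ e (oneWayFour true) e) true
          rw [Function.update_self]
          simp [allows, oneWayFour]
      · rw [Function.update_of_ne he] at hall
        exact Or.inl (Or.inl ⟨a, by rw [Function.update_of_ne he]; exact hall, ht, hh⟩)
    · exact Or.inl (Or.inr hab)
  · rintro ((⟨a, hall, ht, hh⟩ | hab) | ⟨rfl, rfl⟩)
    · by_cases he : a.1 = e
      · refine Or.inl ⟨a, ?_, ht, hh⟩
        rw [he, Function.update_self]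
        simp [allows]
      · rw [Function.update_of_ne he] at hall
        exact Or.inl ⟨a, by rw [Function.update_of_ne he]; exact hall, ht, hh⟩
    · exact Or.inr hab
    · refine Or.inl ⟨(e, false), ?_, rfl, rfl⟩
      show allows (Function.update φ e Four.two e) false
      rw [Function.update_self]
      simp [allows]

private lemma reach_update_oneWay (φ : E → Four) (e : E) (b : Bool) (x y : V) :
    reach src tgt A B (Function.update φ e (oneWayFour b)) x y ↔
      Rarc (reach src tgt A B (Function.update φ e Four.zero))
        (arcTail src tgt (e, b)) (arcHead src tgt (e, b)) x y :=
  (rtg_congr (arcStep_update_oneWay src tgt A B φ e b)).trans rtg_arc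

private lemma reach_update_fwd (φ : E → Four) (e : E) (x y : V) :
    reach src tgt A B (Function.update φ e Four.forward) x y ↔
      Rarc (reach src tgt A B (Function.update φ e Four.zero)) (src e) (tgt e) x y := by
  have h := reach_update_oneWay src tgt A B φ e true x y
  simpa [oneWayFour, arcTail, arcHead] using h

private lemma reach_update_bwd (φ : E → Four) (e : E) (x y : V) :
    reach src tgt A B (Function.update φ e Four.backward) x y ↔
      Rarc (reach src tgt A B (Function.update φ e Four.zero)) (tgt e) (src e) x y := by
  have h := reach_update_oneWay src tgt A B φ e false x y
  simpa [oneWayFour, arcTail, arcHead] using h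

private lemma reach_update_two (φ : E → Four) (e : E) (x y : V) :
    reach src tgt A B (Function.update φ e Four.two) x y ↔
      (Rarc (reach src tgt A B (Function.update φ e Four.zero)) (src e) (tgt e) x y ∨
       Rarc (reach src tgt A B (Function.update φ e Four.zero)) (tgt e) (src e) x y) := by
  set R := reach src tgt A B (Function.update φ e Four.zero) with hR
  have h1 : reach src tgt A B (Function.update φ e Four.two) x y ↔
      (reach src tgt A B (Function.update φ e (oneWayFour true)) x y ∨
        (reach src tgt A B (Function.update φ e (oneWayFour true)) x (tgt e) ∧
         reach src tgt A B (Function.update φ e (oneWayFour true)) (src e) y)) :=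
    (rtg_congr (fun x y => by
      simpa [arcTail, arcHead] using arcStep_update_two src tgt A B φ e x y)).trans rtg_arc
  rw [h1]
  have hfw : ∀ a b : V, reach src tgt A B (Function.update φ e (oneWayFour true)) a b ↔
      Rarc R (src e) (tgt e) a b := fun a b => by
    have := reach_update_oneWay src tgt A B φ e true a b
    simpa [arcTail, arcHead] using this
  rw [hfw, hfw, hfw]
  exact rarc_two (fun h1 h2 => h1.trans h2) (src e) (tgt e) x y

private lemma key_and (φ : E → Four) (e : E) :
    ((IsValid src tgt A B (Function.update φ e Four.zero) ∧
      IsValid src tgt A B (Function.update φ e Four.two)) ↔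
     (IsValid src tgt A B (Function.update φ e Four.forward) ∧
      IsValid src tgt A B (Function.update φ e Four.backward))) := by
  set R := reach src tgt A B (Function.update φ e Four.zero) with hR
  have h0 : IsValid src tgt A B (Function.update φ e Four.zero) ↔ Valid' A B R := Iff.rfl
  have hf : IsValid src tgt A B (Function.update φ e Four.forward) ↔
      Valid' A B (Rarc R (src e) (tgt e)) :=
    valid'_congr (reach_update_fwd src tgt A B φ e)
  have hb : IsValid src tgt A B (Function.update φ e Four.backward) ↔
      Valid' A B (Rarc R (tgt e) (src e)) :=
    valid'_congr (reach_update_bwd src tgt A B φ e)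
  have h2 : IsValid src tgt A B (Function.update φ e Four.two) ↔
      Valid' A B (fun x y => Rarc R (src e) (tgt e) x y ∨ Rarc R (tgt e) (src e) x y) :=
    valid'_congr (reach_update_two src tgt A B φ e)
  rw [h0, hf, hb, h2]
  exact l1 (fun h1 h2 => h1.trans h2)

private lemma key_or (φ : E → Four) (e : E) :
    ((IsValid src tgt A B (Function.update φ e Four.zero) ∨
      IsValid src tgt A B (Function.update φ e Four.two)) ↔
     (IsValid src tgt A B (Function.update φ e Four.forward) ∨
      IsValid src tgt A B (Function.update φ e Four.backward))) := by
  set R := reach src tgt A B (Function.update φ e Four.zero) with hR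
  have h0 : IsValid src tgt A B (Function.update φ e Four.zero) ↔ Valid' A B R := Iff.rfl
  have hf : IsValid src tgt A B (Function.update φ e Four.forward) ↔
      Valid' A B (Rarc R (src e) (tgt e)) :=
    valid'_congr (reach_update_fwd src tgt A B φ e)
  have hb : IsValid src tgt A B (Function.update φ e Four.backward) ↔
      Valid' A B (Rarc R (tgt e) (src e)) :=
    valid'_congr (reach_update_bwd src tgt A B φ e)
  have h2 : IsValid src tgt A B (Function.update φ e Four.two) ↔
      Valid' A B (fun x y => Rarc R (src e) (tgt e) x y ∨ Rarc R (tgt e) (src e) x y) :=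
    valid'_congr (reach_update_two src tgt A B φ e)
  rw [h0, hf, hb, h2]
  exact l2 (fun h1 h2 => h1.trans h2) (reach_AB src tgt A B _)

end ConcreteValid


section CardStep

variable {V E : Type*} [DecidableEq E] (src tgt : E → V) (A B : Set (V × V))

open Classical in
private noncomputable def pickOW (e : E) (φ : E → Four) : Four :=
  if IsValid src tgt A B (Function.update φ e Four.forward) ∧
      IsValid src tgt A B (Function.update φ e Four.backward) then
    (if φ e = Four.zero then Four.forward else Four.backward)
  else if IsValid src tgt A B (Function.update φ e Four.forward) then Four.forward
  else Four.backward

open Classical in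
private noncomputable def pickSol (e : E) (φ : E → Four) : Four :=
  if IsValid src tgt A B (Function.update φ e Four.zero) ∧
      IsValid src tgt A B (Function.update φ e Four.two) then
    (if φ e = Four.forward then Four.zero else Four.two)
  else if IsValid src tgt A B (Function.update φ e Four.zero) then Four.zero
  else Four.two

private lemma pickOW_oneWay (e : E) (φ : E → Four) : ¬ IsSolid (pickOW src tgt A B e φ) := by
  unfold pickOW
  split_ifs <;> simp [IsSolid]

private lemma pickSol_solid (e : E) (φ : E → Four) : IsSolid (pickSol src tgt A B e φ) := by
  unfold pickSol
  split_ifs <;> simp [IsSolid]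

private lemma pickOW_valid (e : E) (φ : E → Four) (hv : IsValid src tgt A B φ)
    (hs : IsSolid (φ e)) :
    IsValid src tgt A B (Function.update φ e (pickOW src tgt A B e φ)) := by
  have hQ : IsValid src tgt A B (Function.update φ e (φ e)) := by
    rwa [Function.update_eq_self]
  have h02 : IsValid src tgt A B (Function.update φ e Four.zero) ∨
      IsValid src tgt A B (Function.update φ e Four.two) := by
    rcases hs with h | h <;> rw [h] at hQ
    · exact Or.inl hQ
    · exact Or.inr hQ
  have hfb := (key_or src tgt A B φ e).mp h02
  unfold pickOW
  split_ifs with h1 h2 h3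
  · exact h1.1
  · exact h1.2
  · exact h3
  · exact hfb.resolve_left h3

private lemma pickSol_valid (e : E) (φ : E → Four) (hv : IsValid src tgt A B φ)
    (hns : ¬ IsSolid (φ e)) :
    IsValid src tgt A B (Function.update φ e (pickSol src tgt A B e φ)) := by
  have hQ : IsValid src tgt A B (Function.update φ e (φ e)) := by
    rwa [Function.update_eq_self]
  have hfb : IsValid src tgt A B (Function.update φ e Four.forward) ∨
      IsValid src tgt A B (Function.update φ e Four.backward) := by
    rcases h : φ e with _ | _ | _ | _ <;> rw [h] at hQ
    · exact absurd (Or.inl h) hns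
    · exact Or.inl hQ
    · exact Or.inr hQ
    · exact absurd (Or.inr h) hns
  have h02 := (key_or src tgt A B φ e).mpr hfb
  unfold pickSol
  split_ifs with h1 h2 h3
  · exact h1.1
  · exact h1.2
  · exact h3
  · exact h02.resolve_left h3

private lemma solidSet_update_oneWay (φ : E → Four) (e : E) {c : Four} (hc : ¬ IsSolid c) :
    solidSet (Function.update φ e c) = solidSet φ \ {e} := by
  ext x
  by_cases hx : x = e
  · rw [hx]
    constructor
    · intro h
      have h' : IsSolid (Function.update φ e c e) := h
      rw [Function.update_self] at h'
      exact absurd h' hc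
    · intro h
      exact absurd rfl h.2
  · simp only [solidSet, Set.mem_setOf_eq, Function.update_of_ne hx, Set.mem_diff,
      Set.mem_singleton_iff]
    exact ⟨fun h => ⟨h, hx⟩, fun h => h.1⟩

private lemma solidSet_update_solid (φ : E → Four) (e : E) {c : Four} (hc : IsSolid c) :
    solidSet (Function.update φ e c) = insert e (solidSet φ) := by
  ext x
  by_cases hx : x = e
  · rw [hx]
    constructor
    · intro _
      exact Set.mem_insert e _
    · intro _
      show IsSolid (Function.update φ e c e)
      rw [Function.update_self]
      exact hc
  · simp only [solidSet, Set.mem_setOf_eq, Function.update_of_ne hx, Set.mem_insert_iff]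
    exact ⟨fun h => Or.inr h, fun h => h.resolve_left hx⟩

private lemma pickSol_update_pickOW (e : E) (φ : E → Four) (hv : IsValid src tgt A B φ)
    (hs : IsSolid (φ e)) :
    pickSol src tgt A B e (Function.update φ e (pickOW src tgt A B e φ)) = φ e := by
  have hQ : IsValid src tgt A B (Function.update φ e (φ e)) := by
    rwa [Function.update_eq_self]
  have hU : Function.update (Function.update φ e (pickOW src tgt A B e φ)) e =
      Function.update φ e := funext fun c => Function.update_idem _ c φ
  unfold pickSol
  rw [hU, Function.update_self]
  by_cases hp : IsValid src tgt A B (Function.update φ e Four.forward) ∧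
      IsValid src tgt A B (Function.update φ e Four.backward)
  · have h02 := (key_and src tgt A B φ e).mpr hp
    rw [if_pos h02]
    unfold pickOW
    rw [if_pos hp]
    rcases hs with h | h <;> rw [h] <;> simp
  · have h02 : ¬ (IsValid src tgt A B (Function.update φ e Four.zero) ∧
        IsValid src tgt A B (Function.update φ e Four.two)) :=
      fun hc => hp ((key_and src tgt A B φ e).mp hc)
    rw [if_neg h02]
    rcases hs with h | h <;> rw [h] at hQ ⊢
    · rw [if_pos hQ]
    · rw [if_neg (fun h0 => h02 ⟨h0, hQ⟩)]

private lemma pickOW_update_pickSol (e : E) (φ : E → Four) (hv : IsValid src tgt A B φ)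
    (hns : ¬ IsSolid (φ e)) :
    pickOW src tgt A B e (Function.update φ e (pickSol src tgt A B e φ)) = φ e := by
  have hQ : IsValid src tgt A B (Function.update φ e (φ e)) := by
    rwa [Function.update_eq_self]
  have how : φ e = Four.forward ∨ φ e = Four.backward := by
    rcases h : φ e with _ | _ | _ | _
    · exact absurd (Or.inl h) hns
    · exact Or.inl rfl
    · exact Or.inr rfl
    · exact absurd (Or.inr h) hns
  have hU : Function.update (Function.update φ e (pickSol src tgt A B e φ)) e =
      Function.update φ e := funext fun c => Function.update_idem _ c φ
  unfold pickOW
  rw [hU, Function.update_self]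
  by_cases hp : IsValid src tgt A B (Function.update φ e Four.zero) ∧
      IsValid src tgt A B (Function.update φ e Four.two)
  · have hfb := (key_and src tgt A B φ e).mp hp
    rw [if_pos hfb]
    unfold pickSol
    rw [if_pos hp]
    rcases how with h | h <;> rw [h] <;> simp
  · have hfb' : ¬ (IsValid src tgt A B (Function.update φ e Four.forward) ∧
        IsValid src tgt A B (Function.update φ e Four.backward)) :=
      fun hc => hp ((key_and src tgt A B φ e).mpr hc)
    rw [if_neg hfb']
    rcases how with h | h <;> rw [h] at hQ ⊢
    · rw [if_pos hQ]
    · rw [if_neg (fun h0 => hfb' ⟨h0, hQ⟩)]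

private lemma card_step (e : E) (S : Set E) (he : e ∉ S) :
    Nat.card {φ : E → Four // IsValid src tgt A B φ ∧ solidSet φ = insert e S} =
      Nat.card {φ : E → Four // IsValid src tgt A B φ ∧ solidSet φ = S} := by
  apply Nat.card_congr
  refine
    { toFun := fun x => ⟨Function.update x.1 e (pickOW src tgt A B e x.1), ?_, ?_⟩
      invFun := fun y => ⟨Function.update y.1 e (pickSol src tgt A B e y.1), ?_, ?_⟩
      left_inv := ?_
      right_inv := ?_ }
  · obtain ⟨φ, hv, hsol⟩ := x
    have hs : IsSolid (φ e) := by
      have : e ∈ solidSet φ := by rw [hsol]; exact Set.mem_insert e S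
      exact this
    exact pickOW_valid src tgt A B e φ hv hs
  · obtain ⟨φ, hv, hsol⟩ := x
    rw [solidSet_update_oneWay φ e (pickOW_oneWay src tgt A B e φ), hsol,
      Set.insert_diff_self_of_notMem he]
  · obtain ⟨ψ, hv, hsol⟩ := y
    have hns : ¬ IsSolid (ψ e) := by
      intro h
      have : e ∈ solidSet ψ := h
      rw [hsol] at this
      exact he this
    exact pickSol_valid src tgt A B e ψ hv hns
  · obtain ⟨ψ, hv, hsol⟩ := y
    rw [solidSet_update_solid ψ e (pickSol_solid src tgt A B e ψ), hsol]
  · rintro ⟨φ, hv, hsol⟩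
    apply Subtype.ext
    show Function.update (Function.update φ e (pickOW src tgt A B e φ)) e
      (pickSol src tgt A B e (Function.update φ e (pickOW src tgt A B e φ))) = φ
    have hs : IsSolid (φ e) := by
      have : e ∈ solidSet φ := by rw [hsol]; exact Set.mem_insert e S
      exact this
    rw [Function.update_idem, pickSol_update_pickOW src tgt A B e φ hv hs,
      Function.update_eq_self]
  · rintro ⟨ψ, hv, hsol⟩
    apply Subtype.ext
    show Function.update (Function.update ψ e (pickSol src tgt A B e ψ)) e
      (pickOW src tgt A B e (Function.update ψ e (pickSol src tgt A B e ψ))) = ψ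
    have hns : ¬ IsSolid (ψ e) := by
      intro h
      have : e ∈ solidSet ψ := h
      rw [hsol] at this
      exact he this
    rw [Function.update_idem, pickOW_update_pickSol src tgt A B e ψ hv hns,
      Function.update_eq_self]

end CardStep

end Statement0Aux

/-- For any finite graph `G = (V,E)` (with multiplicities and loops allowed,
encoded by endpoint maps `src, tgt : E → V`), any `A, B ⊆ V²` and any `S, S' ⊆ E`, the number
of `(A,B)`-valid fourientations with solid edge set `S` equals the number of `(A,B)`-valid
fourientations with solid edge set `S'`. -/
theorem statement0 {V E : Type*} [Fintype V] [Fintype E] (src tgt : E → V)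
    (A B : Set (V × V)) (S S' : Set E) :
    Nat.card {φ : E → Four // IsValid src tgt A B φ ∧ solidSet φ = S} =
    Nat.card {φ : E → Four // IsValid src tgt A B φ ∧ solidSet φ = S'} := by
  classical
  suffices h : ∀ T : Set E, Nat.card {φ : E → Four // IsValid src tgt A B φ ∧ solidSet φ = T} =
      Nat.card {φ : E → Four // IsValid src tgt A B φ ∧ solidSet φ = (∅ : Set E)} by
    rw [h S, h S']
  intro T
  refine Set.Finite.induction_on T (Set.toFinite T) rfl ?_
  intro a s ha _ ih
  rw [card_step src tgt A B a s ha, ih]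
end SubgraphsVsOrientations
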